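/- Let G = (V,E) be a finite simple graph and let g : V → ℝ be locally injective. Then, as polynomials in t, f_G(t) = 1 + t · Σ_{v ∈ V} f_{S_g^-(v)}(t). -/

import Mathlib

open Finset
open scoped Classical

/-- The cliques of the graph `G` contained in the vertex set `A`
(nonempty sets of pairwise adjacent vertices). -/
noncomputable def cliquesOn {V : Type*} (G : SimpleGraph V) (A : Finset V) :
    Finset (Finset V) :=
  A.powerset.filter (fun s => s.Nonempty ∧ G.IsClique (s : Set V))

/-- The f-polynomial of the subgraph of `G` induced on `A`:
`f(t) = 1 + Σ_k f_k t^{k+1}` where `f_k` counts the `(k+1)`-element cliques;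
equivalently `1 + Σ_{x clique ⊆ A} t^{|x|}`. -/
noncomputable def fPolyOn {V : Type*} (G : SimpleGraph V) (A : Finset V) :
    Polynomial ℤ :=
  1 + ∑ s ∈ cliquesOn G A, Polynomial.X ^ s.card

/-- The vertex set of `S_g^-(v)`: the neighbours `w` of `v` with `g w < g v`. -/
noncomputable def sphereMinus {V : Type*} [Fintype V] (G : SimpleGraph V)
    (g : V → ℝ) (v : V) : Finset V :=
  Finset.univ.filter (fun w => G.Adj v w ∧ g w < g v)

/-- For a locally injective function `g` on a finite simple graph `G`,
`f_G(t) = 1 + t · Σ_v f_{S_g^-(v)}(t)` as polynomials. -/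
theorem fPoly_eq_one_add_X_mul_sum {V : Type*} [Fintype V] (G : SimpleGraph V)
    (g : V → ℝ) (hg : ∀ v w : V, G.Adj v w → g v ≠ g w) :
    fPolyOn G Finset.univ =
      1 + Polynomial.X * ∑ v : V, fPolyOn G (sphereMinus G g v) := by
  classical
  have hmemS : ∀ v w, w ∈ sphereMinus G g v ↔ G.Adj v w ∧ g w < g v := by
    intro v w; simp [sphereMinus]
  have hvS : ∀ v, v ∉ sphereMinus G g v := fun v h => G.loopless.irrefl v ((hmemS v v).1 h).1
  set T : V → Finset (Finset V) := fun v => insert (∅ : Finset V) (cliquesOn G (sphereMinus G g v)) with hT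
  have hmemT : ∀ v s, s ∈ T v ↔ s ⊆ sphereMinus G g v ∧ G.IsClique (s : Set V) := by
    intro v s
    constructor
    · intro h
      rcases Finset.mem_insert.1 h with rfl | h
      · exact ⟨Finset.empty_subset _, by simp [SimpleGraph.IsClique]⟩
      · simp only [cliquesOn, Finset.mem_filter, Finset.mem_powerset] at h
        exact ⟨h.1, h.2.2⟩
    · rintro ⟨hsub, hcl⟩
      rcases s.eq_empty_or_nonempty with rfl | hne
      · exact Finset.mem_insert_self _ _
      · exact Finset.mem_insert_of_mem
          (by simp only [cliquesOn, Finset.mem_filter, Finset.mem_powerset]; exact ⟨hsub, hne, hcl⟩)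
  have hmemC : ∀ x, x ∈ cliquesOn G (univ : Finset V) ↔ x.Nonempty ∧ G.IsClique (x : Set V) := by
    intro x; simp [cliquesOn]
  have main : ∑ p ∈ (univ : Finset V).sigma (fun v => T v),
        (Polynomial.X : Polynomial ℤ) ^ (p.2.card + 1)
      = ∑ x ∈ cliquesOn G (univ : Finset V), (Polynomial.X : Polynomial ℤ) ^ x.card := by
    refine Finset.sum_bij' (fun p _ => insert p.1 p.2)
      (fun x hx => ⟨(x.exists_max_image g ((hmemC x).1 hx).1).choose,
        x.erase (x.exists_max_image g ((hmemC x).1 hx).1).choose⟩)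
      ?_ ?_ ?_ ?_ ?_
    · -- insert p.1 p.2 ∈ C
      rintro ⟨v, s⟩ hp
      rw [Finset.mem_sigma] at hp
      obtain ⟨hsub, hcl⟩ := (hmemT v s).1 hp.2
      refine (hmemC _).2 ⟨⟨v, Finset.mem_insert_self _ _⟩, ?_⟩
      rw [Finset.coe_insert, SimpleGraph.isClique_insert]
      exact ⟨hcl, fun w hw _ => ((hmemS v w).1 (hsub hw)).1⟩
    · -- j lands in sigma
      intro x hx
      obtain ⟨hne, hcl⟩ := (hmemC x).1 hx
      obtain ⟨hm, hmax⟩ := (x.exists_max_image g hne).choose_spec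
      set m := (x.exists_max_image g hne).choose
      rw [Finset.mem_sigma]
      refine ⟨Finset.mem_univ _, (hmemT _ _).2 ⟨?_, hcl.subset (by simp [Finset.erase_subset])⟩⟩
      intro w hw
      have hwx := Finset.mem_of_mem_erase hw
      have hwm : w ≠ m := Finset.ne_of_mem_erase hw
      have hadj : G.Adj m w := hcl hm hwx (Ne.symm hwm)
      exact (hmemS m w).2 ⟨hadj, lt_of_le_of_ne (hmax w hwx) (fun h => hg m w hadj h.symm)⟩
    · -- left inverse
      rintro ⟨v, s⟩ hp
      rw [Finset.mem_sigma] at hp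
      obtain ⟨hsub, hcl⟩ := (hmemT v s).1 hp.2
      have hvs : v ∉ s := fun h => hvS v (hsub h)
      have hne : (insert v s).Nonempty := ⟨v, Finset.mem_insert_self _ _⟩
      obtain ⟨hm, hmax⟩ := ((insert v s).exists_max_image g hne).choose_spec
      set m := ((insert v s).exists_max_image g hne).choose with hmdef
      have hmv : m = v := by
        rcases Finset.mem_insert.1 hm with h | h
        · exact h
        · exact absurd (hmax v (Finset.mem_insert_self _ _))
            (not_le.2 ((hmemS v m).1 (hsub h)).2)
      have : (insert v s).erase m = s := by
        rw [hmv, Finset.erase_insert hvs]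
      exact Sigma.ext hmv (heq_of_eq this)
    · -- right inverse
      intro x hx
      obtain ⟨hne, hcl⟩ := (hmemC x).1 hx
      obtain ⟨hm, hmax⟩ := (x.exists_max_image g hne).choose_spec
      exact Finset.insert_erase hm
    · -- values agree
      rintro ⟨v, s⟩ hp
      rw [Finset.mem_sigma] at hp
      obtain ⟨hsub, hcl⟩ := (hmemT v s).1 hp.2
      have hvs : v ∉ s := fun h => hvS v (hsub h)
      rw [Finset.card_insert_of_notMem hvs]
  have key : ∀ v : V, Polynomial.X * fPolyOn G (sphereMinus G g v)
      = ∑ s ∈ T v, (Polynomial.X : Polynomial ℤ) ^ (s.card + 1) := by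
    intro v
    rw [hT]
    rw [Finset.sum_insert (by simp [cliquesOn])]
    rw [fPolyOn, mul_add, mul_one, Finset.mul_sum]
    simp [pow_succ, mul_comm]
  rw [Finset.mul_sum]
  simp_rw [key]
  rw [← Finset.sum_sigma (univ : Finset V) T (fun p => (Polynomial.X : Polynomial ℤ) ^ (p.2.card + 1))]
  rw [main, fPolyOn]
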